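/- Let G be a connected undirected graph on the vertex set {1,…,L}, let η > 0, and let W ∈ ℝ^{L×L} be a doubly stochastic matrix such that w_{ii} ≥ η for all i, w_{ij} ≥ η whenever {i,j} is an edge of G, and w_{ij} = 0 whenever i ≠ j and {i,j} is not an edge of G. Let J ∈ ℝ^{L×L} denote the all-ones matrix and set c_w := 1 − η/(4L²). Then for every integer τ ≥ 1, ‖W^τ − (1/L)·J‖_F ≤ L · c_w^{τ−1}. -/

import Mathlib

open Matrix Finset

attribute [local instance] Matrix.frobeniusSeminormedAddCommGroup
  Matrix.frobeniusNormedAddCommGroup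

lemma walk_telescope {V : Type*} {G : SimpleGraph V} (z : V → ℝ) :
    ∀ {u v : V} (p : G.Walk u v),
      z u - z v = (p.darts.map fun d => z d.fst - z d.snd).sum := by
  intro u v p
  induction p with
  | nil => simp
  | cons h q ih => simp [SimpleGraph.Walk.darts_cons, ih]; ring_nf; linarith [ih]

lemma key_contraction (L : ℕ) (hL : 0 < L) (G : SimpleGraph (Fin L)) (hG : G.Connected)
    (η : ℝ) (hη : 0 < η) (W : Matrix (Fin L) (Fin L) ℝ)
    (hW_nonneg : ∀ i j, 0 ≤ W i j)
    (hW_row : ∀ i, ∑ j, W i j = 1)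
    (hW_col : ∀ j, ∑ i, W i j = 1)
    (hW_diag : ∀ i, η ≤ W i i)
    (hW_adj : ∀ i j, G.Adj i j → η ≤ W i j)
    (z : Fin L → ℝ) (hz : ∑ i, z i = 0) :
    ∑ i, (W.mulVec z i) ^ 2 ≤ (1 - η / (2 * (L:ℝ)^2)) * ∑ i, (z i) ^ 2 := by
  classical
  haveI : Nonempty (Fin L) := ⟨⟨0, hL⟩⟩
  set y : Fin L → ℝ := W.mulVec z with hy
  have hyk : ∀ k, y k = ∑ j, W k j * z j := by
    intro k; simp [hy, Matrix.mulVec, dotProduct]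
  -- gap identity
  have hrow_eq : ∀ k, ∑ j, W k j * (z j - y k) ^ 2
      = (∑ j, W k j * (z j) ^ 2) - (y k) ^ 2 := by
    intro k
    have h1 : ∑ j, W k j = 1 := hW_row k
    have h2 : ∑ j, W k j * z j = y k := (hyk k).symm
    have he : ∀ j, W k j * (z j - y k) ^ 2
        = W k j * (z j) ^ 2 - (2 * y k) * (W k j * z j) + (y k) ^ 2 * W k j := by
      intro j; ring
    rw [Finset.sum_congr rfl fun j _ => he j]
    rw [Finset.sum_add_distrib, Finset.sum_sub_distrib, ← Finset.mul_sum, ← Finset.mul_sum,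
      h1, h2]
    ring
  set Gap : ℝ := ∑ k, ∑ j, W k j * (z j - y k) ^ 2 with hGapdef
  have hgap : Gap = (∑ i, (z i) ^ 2) - ∑ i, (y i) ^ 2 := by
    rw [hGapdef, Finset.sum_congr rfl fun k _ => hrow_eq k, Finset.sum_sub_distrib]
    congr 1
    rw [Finset.sum_comm]
    refine Finset.sum_congr rfl fun j _ => ?_
    rw [← Finset.sum_mul, hW_col j, one_mul]
  -- Gap dominates eta * Q
  set Qd : ℝ := ∑ k, (z k - y k) ^ 2 with hQd
  set Qa : ℝ := ∑ d : G.Dart, (z d.snd - y d.fst) ^ 2 with hQa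
  have hQd0 : 0 ≤ Qd := Finset.sum_nonneg fun _ _ => sq_nonneg _
  have hQa0 : 0 ≤ Qa := Finset.sum_nonneg fun _ _ => sq_nonneg _
  have hGapQ : η * Qd + η * Qa ≤ Gap := by
    set f : Fin L × Fin L → ℝ := fun p => W p.1 p.2 * (z p.2 - y p.1) ^ 2 with hf
    have hf0 : ∀ p : Fin L × Fin L, 0 ≤ f p := fun p =>
      mul_nonneg (hW_nonneg _ _) (sq_nonneg _)
    have hGapf : Gap = ∑ p ∈ (univ : Finset (Fin L)) ×ˢ univ, f p := by
      rw [Finset.sum_product]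
    set T1 : Finset (Fin L × Fin L) := univ.image fun k => (k, k) with hT1
    set T2 : Finset (Fin L × Fin L) := (univ : Finset G.Dart).image
      (fun d => d.toProd) with hT2
    have hs1 : ∑ p ∈ T1, f p = ∑ k, f (k, k) :=
      Finset.sum_image (by intro a _ b _ h; simpa using congrArg Prod.fst h)
    have hs2 : ∑ p ∈ T2, f p = ∑ d : G.Dart, f d.toProd :=
      Finset.sum_image (by intro a _ b _ h; exact SimpleGraph.Dart.ext a b h)
    have hdisj : Disjoint T1 T2 := by
      rw [Finset.disjoint_left]
      rintro p hp1 hp2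
      rw [hT1, Finset.mem_image] at hp1
      rw [hT2, Finset.mem_image] at hp2
      obtain ⟨k, -, rfl⟩ := hp1
      obtain ⟨d, -, hd⟩ := hp2
      have : d.fst = d.snd := by
        have h1 : d.fst = k := congrArg Prod.fst hd
        have h2 : d.snd = k := congrArg Prod.snd hd
        rw [h1, h2]
      exact d.fst_ne_snd this
    have hsub : T1 ∪ T2 ⊆ univ ×ˢ univ := fun p _ => by simp
    have hle : ∑ p ∈ T1 ∪ T2, f p ≤ Gap := by
      rw [hGapf]
      exact Finset.sum_le_sum_of_subset_of_nonneg hsub fun p _ _ => hf0 p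
    rw [Finset.sum_union hdisj, hs1, hs2] at hle
    have h1 : η * Qd ≤ ∑ k, f (k, k) := by
      rw [hQd, Finset.mul_sum]
      exact Finset.sum_le_sum fun k _ =>
        mul_le_mul_of_nonneg_right (hW_diag k) (sq_nonneg _)
    have h2 : η * Qa ≤ ∑ d : G.Dart, f d.toProd := by
      rw [hQa, Finset.mul_sum]
      exact Finset.sum_le_sum fun d _ =>
        mul_le_mul_of_nonneg_right (hW_adj _ _ d.adj) (sq_nonneg _)
    linarith
  -- Path lower bound : sum z^2 <= 2 L^2 (Qd + Qa)
  set S : ℝ := ∑ i, (z i) ^ 2 with hS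
  have hS0 : 0 ≤ S := Finset.sum_nonneg fun _ _ => sq_nonneg _
  have hpath : S ≤ 2 * (L:ℝ) ^ 2 * (Qd + Qa) := by
    obtain ⟨s, -, hs⟩ := Finset.exists_max_image univ z univ_nonempty
    obtain ⟨t, -, ht⟩ := Finset.exists_min_image univ z univ_nonempty
    have hzs : 0 ≤ z s := by
      by_contra hc
      push_neg at hc
      have : ∑ i, z i ≤ ∑ _i : Fin L, z s := Finset.sum_le_sum fun i _ => hs i (mem_univ i)
      rw [hz, Finset.sum_const, Finset.card_univ, Fintype.card_fin, nsmul_eq_mul] at this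
      have hLpos : (0:ℝ) < L := by exact_mod_cast hL
      nlinarith
    have hzt : z t ≤ 0 := by
      by_contra hc
      push_neg at hc
      have : ∑ _i : Fin L, z t ≤ ∑ i, z i := Finset.sum_le_sum fun i _ => ht i (mem_univ i)
      rw [hz, Finset.sum_const, Finset.card_univ, Fintype.card_fin, nsmul_eq_mul] at this
      have hLpos : (0:ℝ) < L := by exact_mod_cast hL
      nlinarith
    have hSbound : S ≤ (L:ℝ) * (z s - z t) ^ 2 := by
      have : ∀ k : Fin L, (z k) ^ 2 ≤ (z s - z t) ^ 2 := fun k =>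
        sq_le_sq' (by linarith [ht k (mem_univ k)]) (by linarith [hs k (mem_univ k)])
      calc S ≤ ∑ _k : Fin L, (z s - z t) ^ 2 :=
              Finset.sum_le_sum fun k _ => this k
        _ = (L:ℝ) * (z s - z t) ^ 2 := by
              rw [Finset.sum_const, Finset.card_univ, Fintype.card_fin, nsmul_eq_mul]
    -- get a path from s to t
    obtain ⟨w⟩ := hG.preconnected s t
    set q : G.Walk s t := (w.toPath : G.Walk s t) with hq
    have hqp : q.IsPath := w.toPath.2
    have hnodup : q.darts.Nodup :=
      SimpleGraph.Walk.darts_nodup_of_support_nodup hqp.support_nodup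
    set D : Finset G.Dart := q.darts.toFinset with hD
    have hcard : (D.card : ℝ) ≤ (L:ℝ) := by
      have h1 : D.card = q.darts.length := List.toFinset_card_of_nodup hnodup
      have h2 : q.darts.length = q.length := SimpleGraph.Walk.length_darts q
      have h3 : q.length < L := by
        have := hqp.length_lt
        rwa [Fintype.card_fin] at this
      have h4 : D.card ≤ L := by omega
      exact_mod_cast h4
    have htele : z s - z t = ∑ d ∈ D, (z d.fst - z d.snd) := by
      rw [hD, List.sum_toFinset _ hnodup]
      exact walk_telescope z q
    set T : ℝ := ∑ d ∈ D, (z d.fst - z d.snd) ^ 2 with hT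
    have hT0 : 0 ≤ T := Finset.sum_nonneg fun _ _ => sq_nonneg _
    have hCS : (z s - z t) ^ 2 ≤ (D.card : ℝ) * T := by
      rw [htele, hT]
      exact_mod_cast sq_sum_le_card_mul_sum_sq (s := D) (f := fun d : G.Dart => z d.fst - z d.snd)
    have hTsplit : T ≤ 2 * (∑ d ∈ D, (z d.fst - y d.fst) ^ 2)
        + 2 * (∑ d ∈ D, (y d.fst - z d.snd) ^ 2) := by
      rw [hT, Finset.mul_sum, Finset.mul_sum, ← Finset.sum_add_distrib]
      refine Finset.sum_le_sum fun d _ => ?_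
      nlinarith [sq_nonneg ((z d.fst - y d.fst) - (y d.fst - z d.snd))]
    have hA : ∑ d ∈ D, (z d.fst - y d.fst) ^ 2 ≤ Qd := by
      have hmapnodup : (q.darts.map fun d => d.fst).Nodup := by
        rw [SimpleGraph.Walk.map_fst_darts]
        exact hqp.support_nodup.sublist (List.dropLast_sublist _)
      have hinj : Set.InjOn (fun d : G.Dart => d.fst) D := by
        intro a ha b hb h
        exact List.inj_on_of_nodup_map hmapnodup (List.mem_toFinset.mp ha)
          (List.mem_toFinset.mp hb) h
      have himg : ∑ k ∈ D.image (fun d : G.Dart => d.fst), (z k - y k) ^ 2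
          = ∑ d ∈ D, (z d.fst - y d.fst) ^ 2 :=
        Finset.sum_image (fun a ha b hb h => hinj ha hb h)
      calc ∑ d ∈ D, (z d.fst - y d.fst) ^ 2
          = ∑ k ∈ D.image (fun d => d.fst), (z k - y k) ^ 2 := himg.symm
        _ ≤ Qd := Finset.sum_le_sum_of_subset_of_nonneg (Finset.subset_univ _)
            fun _ _ _ => sq_nonneg _
    have hB : ∑ d ∈ D, (y d.fst - z d.snd) ^ 2 ≤ Qa := by
      have : ∑ d ∈ D, (y d.fst - z d.snd) ^ 2
          ≤ ∑ d : G.Dart, (y d.fst - z d.snd) ^ 2 :=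
        Finset.sum_le_sum_of_subset_of_nonneg (Finset.subset_univ _)
          fun _ _ _ => sq_nonneg _
      calc ∑ d ∈ D, (y d.fst - z d.snd) ^ 2
          ≤ ∑ d : G.Dart, (y d.fst - z d.snd) ^ 2 := this
        _ = Qa := by
            rw [hQa]
            exact Finset.sum_congr rfl fun d _ => by ring
    have hL0 : (0:ℝ) ≤ (L:ℝ) := Nat.cast_nonneg L
    calc S ≤ (L:ℝ) * (z s - z t) ^ 2 := hSbound
      _ ≤ (L:ℝ) * ((D.card : ℝ) * T) := by
          exact mul_le_mul_of_nonneg_left hCS hL0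
      _ ≤ (L:ℝ) * ((L:ℝ) * T) := by
          exact mul_le_mul_of_nonneg_left (mul_le_mul_of_nonneg_right hcard hT0) hL0
      _ ≤ (L:ℝ) * ((L:ℝ) * (2 * (Qd + Qa))) := by
          have : T ≤ 2 * (Qd + Qa) := by linarith
          exact mul_le_mul_of_nonneg_left (mul_le_mul_of_nonneg_left this hL0) hL0
      _ = 2 * (L:ℝ) ^ 2 * (Qd + Qa) := by ring
  -- conclude
  have hL2 : (0:ℝ) < 2 * (L:ℝ) ^ 2 := by
    have : (0:ℝ) < L := by exact_mod_cast hL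
    positivity
  have hfrac : η / (2 * (L:ℝ) ^ 2) * S ≤ η * (Qd + Qa) := by
    calc η / (2 * (L:ℝ) ^ 2) * S ≤ η / (2 * (L:ℝ) ^ 2) * (2 * (L:ℝ) ^ 2 * (Qd + Qa)) :=
          mul_le_mul_of_nonneg_left hpath (by positivity)
      _ = η * (Qd + Qa) := by field_simp
  have hye : ∑ i, (y i) ^ 2 = S - Gap := by rw [hgap]; ring
  have hd : η * (Qd + Qa) = η * Qd + η * Qa := by ring
  have hexp : (1 - η / (2 * (L:ℝ) ^ 2)) * S = S - η / (2 * (L:ℝ) ^ 2) * S := by ring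
  show ∑ i, (y i) ^ 2 ≤ (1 - η / (2 * (L:ℝ) ^ 2)) * S
  rw [hye, hexp]
  linarith


lemma pow_col_sum (L : ℕ) (W : Matrix (Fin L) (Fin L) ℝ)
    (hW_col : ∀ j, ∑ i, W i j = 1) :
    ∀ n (j : Fin L), ∑ i, (W ^ n) i j = 1 := by
  intro n
  induction n with
  | zero =>
    intro j
    simp [Matrix.one_apply, Finset.sum_ite_eq, Finset.mem_univ]
  | succ n ih =>
    intro j
    rw [pow_succ]
    have : ∀ i, (W ^ n * W) i j = ∑ k, (W ^ n) i k * W k j := fun i => Matrix.mul_apply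
    rw [Finset.sum_congr rfl fun i _ => this i, Finset.sum_comm]
    calc ∑ k, ∑ i, (W ^ n) i k * W k j = ∑ k, (∑ i, (W ^ n) i k) * W k j := by
          refine Finset.sum_congr rfl fun k _ => ?_
          rw [Finset.sum_mul]
      _ = ∑ k, W k j := by
          refine Finset.sum_congr rfl fun k _ => ?_
          rw [ih k, one_mul]
      _ = 1 := hW_col j

/-- Frobenius-norm contraction of the powers of a doubly stochastic
matrix compatible with a connected graph towards the averaging matrix `(1/L)·J`:
`‖W^τ − (1/L)J‖_F ≤ L · c_w^{τ−1}` with `c_w = 1 − η/(4L²)`. -/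
theorem doubly_stochastic_power_frobenius_bound
    (L : ℕ) (G : SimpleGraph (Fin L)) (hG : G.Connected)
    (η : ℝ) (hη : 0 < η) (W : Matrix (Fin L) (Fin L) ℝ)
    (hW_nonneg : ∀ i j, 0 ≤ W i j)
    (hW_row : ∀ i, ∑ j, W i j = 1)
    (hW_col : ∀ j, ∑ i, W i j = 1)
    (hW_diag : ∀ i, η ≤ W i i)
    (hW_adj : ∀ i j, G.Adj i j → η ≤ W i j)
    (hW_zero : ∀ i j, i ≠ j → ¬ G.Adj i j → W i j = 0)
    (J : Matrix (Fin L) (Fin L) ℝ) (hJ : J = Matrix.of fun _ _ => (1 : ℝ))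
    (cw : ℝ) (hcw : cw = 1 - η / (4 * (L : ℝ) ^ 2)) :
    ∀ τ : ℕ, 1 ≤ τ →
      ‖W ^ τ - (1 / (L : ℝ)) • J‖ ≤ (L : ℝ) * cw ^ (τ - 1) := by
  intro τ hτ
  set M : Matrix (Fin L) (Fin L) ℝ := W ^ τ - (1 / (L : ℝ)) • J with hM
  have hnorm : ‖M‖ = Real.sqrt (∑ i, ∑ j, (M i j) ^ 2) := by
    rw [Matrix.frobenius_norm_def, Real.sqrt_eq_rpow]
    congr 1
    refine Finset.sum_congr rfl fun i _ => Finset.sum_congr rfl fun j _ => ?_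
    rw [Real.norm_eq_abs, show ((2:ℝ)) = ((2:ℕ):ℝ) by norm_num, Real.rpow_natCast, sq_abs]
  rcases Nat.eq_zero_or_pos L with hL0 | hL
  · subst hL0
    have : (∑ i, ∑ j, (M i j) ^ 2) = 0 := by simp
    rw [hnorm, this, Real.sqrt_zero]
    have : ((0:ℕ):ℝ) = 0 := by norm_num
    rw [this, zero_mul]
  · -- main case
    have hLpos : (0:ℝ) < L := by exact_mod_cast hL
    have hL1 : (1:ℝ) ≤ L := by exact_mod_cast hL
    have hη1 : η ≤ 1 := by
      have h1 := hW_diag ⟨0, hL⟩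
      have h2 : W ⟨0, hL⟩ ⟨0, hL⟩ ≤ ∑ j, W ⟨0, hL⟩ j :=
        Finset.single_le_sum (fun j _ => hW_nonneg _ j) (Finset.mem_univ _)
      rw [hW_row] at h2
      linarith
    have h4L2 : (0:ℝ) < 4 * (L:ℝ) ^ 2 := by positivity
    have hcw0 : 0 ≤ cw := by
      rw [hcw]
      have : η / (4 * (L:ℝ) ^ 2) ≤ 1 := by
        rw [div_le_one h4L2]; nlinarith
      linarith
    have hcontr : 1 - η / (2 * (L:ℝ) ^ 2) ≤ cw ^ 2 := by
      rw [hcw]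
      have : (1 - η / (4 * (L:ℝ) ^ 2)) ^ 2
          = 1 - η / (2 * (L:ℝ) ^ 2) + (η / (4 * (L:ℝ) ^ 2)) ^ 2 := by
        field_simp
        ring
      nlinarith [sq_nonneg (η / (4 * (L:ℝ) ^ 2))]
    -- per-column analysis
    have hcol : ∀ (j : Fin L) (n : ℕ),
        ∑ i, ((W ^ (n + 1)) i j - 1 / (L:ℝ)) ^ 2 ≤ (cw ^ 2) ^ n * L := by
      intro j n
      set v : ℕ → Fin L → ℝ := fun n i => (W ^ n) i j - 1 / (L:ℝ) with hv
      have hsum0 : ∀ n, ∑ i, v n i = 0 := by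
        intro n
        rw [hv]
        simp only [Finset.sum_sub_distrib]
        rw [pow_col_sum L W hW_col n j, Finset.sum_const, Finset.card_univ, Fintype.card_fin,
          nsmul_eq_mul]
        field_simp
        ring
      have hrec : ∀ n, v (n + 1) = W.mulVec (v n) := by
        intro n
        funext i
        rw [hv]
        simp only [Matrix.mulVec, dotProduct]
        have : ∀ k, W i k * ((W ^ n) k j - 1 / (L:ℝ))
            = W i k * (W ^ n) k j - (1 / (L:ℝ)) * W i k := fun k => by ring
        rw [Finset.sum_congr rfl fun k _ => this k, Finset.sum_sub_distrib,
          ← Finset.mul_sum, hW_row i, pow_succ']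
        rw [Matrix.mul_apply]
        ring
      induction n with
      | zero =>
        simp only [pow_zero, one_mul]
        have hbd : ∀ i, (v 1 i) ^ 2 ≤ 1 := by
          intro i
          rw [hv]
          simp only [pow_one]
          have h1 : 0 ≤ W i j := hW_nonneg i j
          have h2 : W i j ≤ 1 := by
            have := Finset.single_le_sum (fun k (_ : k ∈ univ) => hW_nonneg i k)
              (Finset.mem_univ j)
            rw [hW_row i] at this
            exact this
          have h3 : 0 < 1 / (L:ℝ) := by positivity
          have h4 : 1 / (L:ℝ) ≤ 1 := by
            rw [div_le_one hLpos]; exact_mod_cast hL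
          nlinarith
        calc ∑ i, (v 1 i) ^ 2 ≤ ∑ _i : Fin L, (1:ℝ) :=
              Finset.sum_le_sum fun i _ => hbd i
          _ = L := by
              rw [Finset.sum_const, Finset.card_univ, Fintype.card_fin, nsmul_eq_mul, mul_one]
      | succ n ih =>
        have hstep : ∑ i, (v (n + 2) i) ^ 2
            ≤ (1 - η / (2 * (L:ℝ) ^ 2)) * ∑ i, (v (n + 1) i) ^ 2 := by
          rw [hrec (n + 1)]
          exact key_contraction L hL G hG η hη W hW_nonneg hW_row hW_col hW_diag hW_adj
            (v (n + 1)) (hsum0 (n + 1))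
        have hnn : 0 ≤ ∑ i, (v (n + 1) i) ^ 2 := Finset.sum_nonneg fun _ _ => sq_nonneg _
        calc ∑ i, (v (n + 2) i) ^ 2
            ≤ (1 - η / (2 * (L:ℝ) ^ 2)) * ∑ i, (v (n + 1) i) ^ 2 := hstep
          _ ≤ cw ^ 2 * ∑ i, (v (n + 1) i) ^ 2 :=
              mul_le_mul_of_nonneg_right hcontr hnn
          _ ≤ cw ^ 2 * ((cw ^ 2) ^ n * L) :=
              mul_le_mul_of_nonneg_left ih (sq_nonneg cw)
          _ = (cw ^ 2) ^ (n + 1) * L := by ring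
    -- assemble
    obtain ⟨n, rfl⟩ : ∃ n, τ = n + 1 := ⟨τ - 1, (Nat.succ_pred_eq_of_pos hτ).symm⟩
    have hMij : ∀ i j, M i j = (W ^ (n + 1)) i j - 1 / (L:ℝ) := by
      intro i j
      rw [hM, Matrix.sub_apply, Matrix.smul_apply, hJ, Matrix.of_apply, smul_eq_mul, mul_one]
    have hSle : ∑ i, ∑ j, (M i j) ^ 2 ≤ ((L:ℝ) * cw ^ n) ^ 2 := by
      have : ∑ i, ∑ j, (M i j) ^ 2 = ∑ j, ∑ i, ((W ^ (n + 1)) i j - 1 / (L:ℝ)) ^ 2 := by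
        rw [Finset.sum_comm]
        exact Finset.sum_congr rfl fun j _ => Finset.sum_congr rfl fun i _ => by rw [hMij]
      rw [this]
      calc ∑ j, ∑ i, ((W ^ (n + 1)) i j - 1 / (L:ℝ)) ^ 2
          ≤ ∑ _j : Fin L, (cw ^ 2) ^ n * (L:ℝ) :=
            Finset.sum_le_sum fun j _ => hcol j n
        _ = (L:ℝ) * ((cw ^ 2) ^ n * (L:ℝ)) := by
            rw [Finset.sum_const, Finset.card_univ, Fintype.card_fin, nsmul_eq_mul]
        _ = ((L:ℝ) * cw ^ n) ^ 2 := by ring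
    have hfinal : ‖M‖ ≤ (L:ℝ) * cw ^ n := by
      rw [hnorm]
      have h1 : Real.sqrt (∑ i, ∑ j, (M i j) ^ 2) ≤ Real.sqrt (((L:ℝ) * cw ^ n) ^ 2) :=
        Real.sqrt_le_sqrt hSle
      rwa [Real.sqrt_sq (by positivity)] at h1
    simpa using hfinal
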